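/- For integers a > b > 0, the following identity of Schur polynomials in three variables holds: s_{(b+1,b+1,0)} · s_{(a+1,b+1,b+1)} = s_{(a+1,b+1,0)} · s_{(b+1,b+1,b+1)} + s_{(a,b+1,b+1)} · s_{(b+1,b+1,1)}. -/

import Mathlib

open MvPolynomial

/-- Complete homogeneous symmetric polynomial in `n` variables, indexed by an
integer, with the convention `h_k = 0` for `k < 0` and `h_0 = 1`. -/
noncomputable def hInt (n : ℕ) (k : ℤ) : MvPolynomial (Fin n) ℤ :=
  if 0 ≤ k then hsymm (Fin n) ℤ k.toNat else 0

/-- The Schur polynomial of `α` in `n` variables, defined via the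
Jacobi–Trudi determinant `s_α = det (h_{α_i - i + j})_{i,j}`. -/
noncomputable def schur (n : ℕ) (α : Fin n → ℕ) : MvPolynomial (Fin n) ℤ :=
  Matrix.det (Matrix.of fun i j : Fin n => hInt n ((α i : ℤ) - (i : ℕ) + (j : ℕ)))

/-- A symmetric polynomial is Schur positive if it is a nonnegative integer
combination of Schur polynomials of partitions. -/
def SchurPositive (n : ℕ) (f : MvPolynomial (Fin n) ℤ) : Prop :=
  ∃ c : (Fin n → ℕ) →₀ ℕ, (∀ lam ∈ c.support, Antitone lam) ∧
    f = c.sum fun lam k => (k : ℤ) • schur n lam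

section Aux

open Finset

lemma hsymm_option_aux (σ : Type*) [Fintype σ] [DecidableEq σ] (n : ℕ) :
    hsymm (Option σ) ℤ (n+1) = X none * hsymm (Option σ) ℤ n
      + rename some (hsymm σ ℤ (n+1)) := by
  classical
  have step1 : hsymm (Option σ) ℤ (n+1)
      = ∑ t : Sym (Option σ) n ⊕ Sym σ (n+1),
          (Multiset.map X ((SymOptionSuccEquiv.decode t : Sym (Option σ) (n+1)) :
            Multiset (Option σ))).prod := by
    rw [hsymm]
    exact (Equiv.sum_comp (symOptionSuccEquiv (α := σ)).symm
      (fun s => (Multiset.map X (s : Multiset (Option σ))).prod)).symm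
  rw [step1, Fintype.sum_sum_type, hsymm, hsymm, map_sum, Finset.mul_sum]
  congr 1
  · refine Finset.sum_congr rfl fun s _ => ?_
    rw [SymOptionSuccEquiv.decode_inl]
    simp [Sym.coe_cons]
  · refine Finset.sum_congr rfl fun s _ => ?_
    rw [SymOptionSuccEquiv.decode_inr]
    rw [Sym.coe_map, Multiset.map_map, ← Multiset.prod_hom' _ (rename (R := ℤ) (some : σ → Option σ))]
    simp

lemma hsymm_fin_one_aux (n : ℕ) : hsymm (Fin 1) ℤ n = X 0 ^ n := by
  have hu : ∀ s : Sym (Fin 1) n, s = Sym.replicate n 0 := fun s =>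
    Sym.coe_injective (by
      rw [Sym.coe_replicate, Multiset.eq_replicate]
      exact ⟨s.2, fun b _ => Subsingleton.elim b 0⟩)
  have huniv : (Finset.univ : Finset (Sym (Fin 1) n)) = {Sym.replicate n 0} :=
    Finset.eq_singleton_iff_unique_mem.mpr ⟨Finset.mem_univ _, fun s _ => hu s⟩
  rw [hsymm, huniv, Finset.sum_singleton]
  show (Multiset.map X (Multiset.replicate n 0)).prod = _
  rw [Multiset.map_replicate, Multiset.prod_replicate]

lemma hsymm_fin_succ_split_aux (m n : ℕ) :
    hsymm (Fin (m+1)) ℤ (n+1) = X 0 * hsymm (Fin (m+1)) ℤ n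
      + rename Fin.succ (hsymm (Fin m) ℤ (n+1)) := by
  have h1 : ∀ k, hsymm (Fin (m+1)) ℤ k
      = rename (⇑(finSuccEquiv m).symm) (hsymm (Option (Fin m)) ℤ k) :=
    fun k => (rename_hsymm _ _ k (finSuccEquiv m).symm).symm
  rw [h1 (n+1), h1 n, hsymm_option_aux, map_add, map_mul, rename_X, rename_rename]
  congr 2

/-- The "tail" complete homogeneous polynomial in the last two of three
variables. -/
noncomputable def Gaux (k : ℕ) : MvPolynomial (Fin 3) ℤ :=
  rename Fin.succ (hsymm (Fin 2) ℤ k)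

lemma R1aux (n : ℕ) : hsymm (Fin 3) ℤ (n+1) = X 0 * hsymm (Fin 3) ℤ n + Gaux (n+1) :=
  hsymm_fin_succ_split_aux 2 n

lemma R2aux (n : ℕ) : Gaux (n+1) = X 1 * Gaux n + X 2 ^ (n+1) := by
  rw [Gaux, Gaux, hsymm_fin_succ_split_aux 1 n, map_add, map_mul, rename_X, rename_rename,
    hsymm_fin_one_aux, map_pow, rename_X]
  norm_num

/-- The Newton-type recurrence for complete homogeneous symmetric polynomials
in three variables. -/
lemma hrec_aux (n : ℕ) : hsymm (Fin 3) ℤ (n+3) =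
    (X 0 + X 1 + X 2) * hsymm (Fin 3) ℤ (n+2)
    - (X 0 * X 1 + X 0 * X 2 + X 1 * X 2) * hsymm (Fin 3) ℤ (n+1)
    + X 0 * X 1 * X 2 * hsymm (Fin 3) ℤ n := by
  have A : hsymm (Fin 3) ℤ (n+3) = X 0 * hsymm (Fin 3) ℤ (n+2) + Gaux (n+3) := by
    simpa [show n+2+1 = n+3 from rfl] using R1aux (n+2)
  have B := R1aux (n+1)
  have C := R1aux n
  have D : Gaux (n+3) = X 1 * Gaux (n+2) + X 2 ^ (n+3) := by
    simpa [show n+2+1 = n+3 from rfl] using R2aux (n+2)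
  have E := R2aux (n+1)
  linear_combination A + D - X 2 * E - (X 1 + X 2) * B + X 1 * X 2 * C

lemma hsymm_one_aux : hsymm (Fin 3) ℤ 1 = X 0 + X 1 + X 2 := by
  rw [hsymm_one, Fin.sum_univ_three]

local notation "H" => hsymm (Fin 3) ℤ

lemma schur_val1 (b' : ℕ) : schur 3 ![b' + 1 + 1, b' + 1 + 1, 0] =
    H (b'+2) * H (b'+2) - H (b'+3) * H (b'+1) := by
  rw [schur, Matrix.det_fin_three]
  simp only [Matrix.of_apply, Matrix.cons_val_zero, Matrix.cons_val_one, Matrix.head_cons,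
    Matrix.cons_val_two, Matrix.tail_cons, Fin.val_zero, Fin.val_one, Fin.val_two]
  push_cast
  ring_nf
  norm_cast
  try simp only [hInt, Int.natCast_nonneg, if_true, Int.toNat_natCast, hsymm_zero,
    show ¬((0:ℤ) ≤ Int.negSucc 0) from by decide, show ¬((0:ℤ) ≤ Int.negSucc 1) from by decide,
    if_false, le_refl, Int.toNat_zero, Int.toNat_one, zero_le_one]
  try ring

lemma schur_val2 (a' b' : ℕ) : schur 3 ![a' + 1 + 1, b' + 1 + 1, b' + 1 + 1] =
    H (a'+2) * (H (b'+2) * H (b'+2) - H (b'+3) * H (b'+1))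
    - H (a'+3) * (H (b'+1) * H (b'+2) - H (b'+3) * H b')
    + H (a'+4) * (H (b'+1) * H (b'+1) - H (b'+2) * H b') := by
  rw [schur, Matrix.det_fin_three]
  simp only [Matrix.of_apply, Matrix.cons_val_zero, Matrix.cons_val_one, Matrix.head_cons,
    Matrix.cons_val_two, Matrix.tail_cons, Fin.val_zero, Fin.val_one, Fin.val_two]
  push_cast
  ring_nf
  norm_cast
  try simp only [hInt, Int.natCast_nonneg, if_true, Int.toNat_natCast, hsymm_zero,
    show ¬((0:ℤ) ≤ Int.negSucc 0) from by decide, show ¬((0:ℤ) ≤ Int.negSucc 1) from by decide,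
    if_false, le_refl, Int.toNat_zero, Int.toNat_one, zero_le_one]
  try ring

lemma schur_val3 (a' b' : ℕ) : schur 3 ![a' + 1 + 1, b' + 1 + 1, 0] =
    H (a'+2) * H (b'+2) - H (a'+3) * H (b'+1) := by
  rw [schur, Matrix.det_fin_three]
  simp only [Matrix.of_apply, Matrix.cons_val_zero, Matrix.cons_val_one, Matrix.head_cons,
    Matrix.cons_val_two, Matrix.tail_cons, Fin.val_zero, Fin.val_one, Fin.val_two]
  push_cast
  ring_nf
  norm_cast
  try simp only [hInt, Int.natCast_nonneg, if_true, Int.toNat_natCast, hsymm_zero,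
    show ¬((0:ℤ) ≤ Int.negSucc 0) from by decide, show ¬((0:ℤ) ≤ Int.negSucc 1) from by decide,
    if_false, le_refl, Int.toNat_zero, Int.toNat_one, zero_le_one]
  try ring

lemma schur_val4 (b' : ℕ) : schur 3 ![b' + 1 + 1, b' + 1 + 1, b' + 1 + 1] =
    H (b'+2) * (H (b'+2) * H (b'+2) - H (b'+3) * H (b'+1))
    - H (b'+3) * (H (b'+1) * H (b'+2) - H (b'+3) * H b')
    + H (b'+4) * (H (b'+1) * H (b'+1) - H (b'+2) * H b') := by
  rw [schur, Matrix.det_fin_three]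
  simp only [Matrix.of_apply, Matrix.cons_val_zero, Matrix.cons_val_one, Matrix.head_cons,
    Matrix.cons_val_two, Matrix.tail_cons, Fin.val_zero, Fin.val_one, Fin.val_two]
  push_cast
  ring_nf
  norm_cast
  try simp only [hInt, Int.natCast_nonneg, if_true, Int.toNat_natCast, hsymm_zero,
    show ¬((0:ℤ) ≤ Int.negSucc 0) from by decide, show ¬((0:ℤ) ≤ Int.negSucc 1) from by decide,
    if_false, le_refl, Int.toNat_zero, Int.toNat_one, zero_le_one]
  try ring

lemma schur_val5 (a' b' : ℕ) : schur 3 ![a' + 1, b' + 1 + 1, b' + 1 + 1] =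
    H (a'+1) * (H (b'+2) * H (b'+2) - H (b'+3) * H (b'+1))
    - H (a'+2) * (H (b'+1) * H (b'+2) - H (b'+3) * H b')
    + H (a'+3) * (H (b'+1) * H (b'+1) - H (b'+2) * H b') := by
  rw [schur, Matrix.det_fin_three]
  simp only [Matrix.of_apply, Matrix.cons_val_zero, Matrix.cons_val_one, Matrix.head_cons,
    Matrix.cons_val_two, Matrix.tail_cons, Fin.val_zero, Fin.val_one, Fin.val_two]
  push_cast
  ring_nf
  norm_cast
  try simp only [hInt, Int.natCast_nonneg, if_true, Int.toNat_natCast, hsymm_zero,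
    show ¬((0:ℤ) ≤ Int.negSucc 0) from by decide, show ¬((0:ℤ) ≤ Int.negSucc 1) from by decide,
    if_false, le_refl, Int.toNat_zero, Int.toNat_one, zero_le_one]
  try ring

lemma schur_val6 (b' : ℕ) : schur 3 ![b' + 1 + 1, b' + 1 + 1, 1] =
    H (b'+2) * (H (b'+2) * H 1 - H (b'+3))
    - H (b'+3) * (H (b'+1) * H 1)
    + H (b'+4) * H (b'+1) := by
  rw [schur, Matrix.det_fin_three]
  simp only [Matrix.of_apply, Matrix.cons_val_zero, Matrix.cons_val_one, Matrix.head_cons,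
    Matrix.cons_val_two, Matrix.tail_cons, Fin.val_zero, Fin.val_one, Fin.val_two]
  push_cast
  ring_nf
  simp only [hInt, show (0:ℤ) ≤ 2 + (b':ℤ) by omega, show (0:ℤ) ≤ 3 + (b':ℤ) by omega,
    show (0:ℤ) ≤ 1 + (b':ℤ) by omega, show (0:ℤ) ≤ 4 + (b':ℤ) by omega,
    show ¬ (0:ℤ) ≤ -1 by omega, if_true, if_false, le_refl, zero_le_one, Int.toNat_zero, Int.toNat_one, hsymm_zero,
    show (2 + (b':ℤ)).toNat = 2 + b' by omega, show (3 + (b':ℤ)).toNat = 3 + b' by omega,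
    show (1 + (b':ℤ)).toNat = 1 + b' by omega, show (4 + (b':ℤ)).toNat = 4 + b' by omega]
  try simp only [hInt, Int.natCast_nonneg, if_true, Int.toNat_natCast, hsymm_zero,
    show ¬((0:ℤ) ≤ Int.negSucc 0) from by decide, show ¬((0:ℤ) ≤ Int.negSucc 1) from by decide,
    if_false, le_refl, Int.toNat_zero, Int.toNat_one, zero_le_one]
  try ring

/-- Abstract form of the Schur identity: a formal consequence of the
three-term recurrence. -/
lemma key_aux {R : Type*} [CommRing R] (x0 x1 x2 p q r s3 s4 t u v w3 w4 h1 : R)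
    (e1 : s3 = (x0+x1+x2)*r - (x0*x1+x0*x2+x1*x2)*q + x0*x1*x2*p)
    (e2 : s4 = (x0+x1+x2)*s3 - (x0*x1+x0*x2+x1*x2)*r + x0*x1*x2*q)
    (e3 : w3 = (x0+x1+x2)*v - (x0*x1+x0*x2+x1*x2)*u + x0*x1*x2*t)
    (e4 : w4 = (x0+x1+x2)*w3 - (x0*x1+x0*x2+x1*x2)*v + x0*x1*x2*u)
    (e5 : h1 = x0+x1+x2) :
    (r * r - s3 * q) *
      (v * (r * r - s3 * q) - w3 * (q * r - s3 * p) + w4 * (q * q - r * p)) =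
    (v * r - w3 * q) *
      (r * (r * r - s3 * q) - s3 * (q * r - s3 * p) + s4 * (q * q - r * p)) +
    (u * (r * r - s3 * q) - v * (q * r - s3 * p) + w3 * (q * q - r * p)) *
      (r * (r * h1 - s3) - s3 * (q * h1) + s4 * q) := by
  subst e4 e3 e2 e1 e5
  ring

end Aux

/-- For `a > b > 0`:
`s_{(b+1,b+1,0)} s_{(a+1,b+1,b+1)}
  = s_{(a+1,b+1,0)} s_{(b+1,b+1,b+1)} + s_{(a,b+1,b+1)} s_{(b+1,b+1,1)}`. -/
theorem schur_identity_family1_third (a b : ℕ) (hab : b < a) (hb : 0 < b) :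
    schur 3 ![b + 1, b + 1, 0] * schur 3 ![a + 1, b + 1, b + 1] =
      schur 3 ![a + 1, b + 1, 0] * schur 3 ![b + 1, b + 1, b + 1] +
      schur 3 ![a, b + 1, b + 1] * schur 3 ![b + 1, b + 1, 1] := by
  obtain ⟨b', rfl⟩ : ∃ b', b = b' + 1 := ⟨b - 1, by omega⟩
  obtain ⟨a', rfl⟩ : ∃ a', a = a' + 1 := ⟨a - 1, by omega⟩
  rw [schur_val1, schur_val2, schur_val3, schur_val4, schur_val5, schur_val6]
  have e2 : hsymm (Fin 3) ℤ (b' + 4) =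
      (X 0 + X 1 + X 2) * hsymm (Fin 3) ℤ (b' + 3)
      - (X 0 * X 1 + X 0 * X 2 + X 1 * X 2) * hsymm (Fin 3) ℤ (b' + 2)
      + X 0 * X 1 * X 2 * hsymm (Fin 3) ℤ (b' + 1) := by
    simpa [show b'+1+3 = b'+4 from rfl, show b'+1+2 = b'+3 from rfl,
      show b'+1+1 = b'+2 from rfl] using hrec_aux (b' + 1)
  have e4 : hsymm (Fin 3) ℤ (a' + 4) =
      (X 0 + X 1 + X 2) * hsymm (Fin 3) ℤ (a' + 3)
      - (X 0 * X 1 + X 0 * X 2 + X 1 * X 2) * hsymm (Fin 3) ℤ (a' + 2)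
      + X 0 * X 1 * X 2 * hsymm (Fin 3) ℤ (a' + 1) := by
    simpa [show a'+1+3 = a'+4 from rfl, show a'+1+2 = a'+3 from rfl,
      show a'+1+1 = a'+2 from rfl] using hrec_aux (a' + 1)
  exact key_aux (X 0) (X 1) (X 2) _ _ _ _ _ _ _ _ _ _ _
    (hrec_aux b') e2 (hrec_aux a') e4 hsymm_one_aux
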